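/- Let d ≥ 1 be an integer, R > 0, and let K : [0,∞) → ℝ be a bounded, nonnegative, measurable function supported in [0,R]. For j ≥ 1 set m_{K,j} := ∫₀^R s^{j−1} K(s) ds and assume m_{K,d} > 0; define the kernel moment ratios B_p := m_{K,d+p}/m_{K,d}. Let F : [0,∞) → ℝ be continuous with F(0) = 0, F(t) > 0 for small t > 0, and F(t) = τ₁ t + τ₂ t² + τ₃ t³ + o(t³) as t → 0⁺ with τ₁ > 0; define the kernel average I_F(h) := (∫₀^R u^{d−1} K(u) F(hu) du)/m_{K,d}. Then the relative bias (I_F(h) − F(B₂^{1/2} h)) / F(B₂^{1/2} h) converges, as h → 0⁺, to (B₁ − B₂^{1/2}) / B₂^{1/2}. -/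

import Mathlib

open MeasureTheory Filter Topology Asymptotics

lemma phi_lim (F : ℝ → ℝ) (τ₁ τ₂ τ₃ : ℝ)
    (hF : (fun t => F t - (τ₁ * t + τ₂ * t ^ 2 + τ₃ * t ^ 3))
      =o[𝓝[>] (0:ℝ)] fun t => t ^ 3) :
    Tendsto (fun t => F t / t) (𝓝[>] (0:ℝ)) (𝓝 τ₁) := by
  have hcube : (fun t : ℝ => t ^ 3) =o[𝓝[>] (0:ℝ)] fun t => t := by
    have : Tendsto (fun t : ℝ => t ^ 3 / t) (𝓝[>] (0:ℝ)) (𝓝 0) := by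
      have h2 : Tendsto (fun t : ℝ => t ^ 2) (𝓝[>] (0:ℝ)) (𝓝 0) := by
        have := (continuous_pow 2).tendsto (0:ℝ)
        simpa using this.mono_left nhdsWithin_le_nhds
      refine h2.congr' ?_
      filter_upwards [self_mem_nhdsWithin] with t ht
      field_simp [ne_of_gt (Set.mem_Ioi.mp ht)]
    rw [isLittleO_iff_tendsto']
    · exact this
    · filter_upwards [self_mem_nhdsWithin] with t ht h
      exact absurd h (ne_of_gt (Set.mem_Ioi.mp ht))
  have hlin := hF.trans hcube
  have h0 : Tendsto (fun t => (F t - τ₁ * t) / t) (𝓝[>] (0:ℝ)) (𝓝 0) := by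
    have hratio : Tendsto (fun t => (F t - (τ₁ * t + τ₂ * t ^ 2 + τ₃ * t ^ 3)) / t)
        (𝓝[>] (0:ℝ)) (𝓝 0) := by
      rw [isLittleO_iff_tendsto'] at hlin
      · exact hlin
      · filter_upwards [self_mem_nhdsWithin] with t ht h
        exact absurd h (ne_of_gt (Set.mem_Ioi.mp ht))
    have hpoly : Tendsto (fun t : ℝ => τ₂ * t + τ₃ * t ^ 2) (𝓝[>] (0:ℝ)) (𝓝 0) := by
      have : Continuous (fun t : ℝ => τ₂ * t + τ₃ * t ^ 2) := by continuity
      have := this.tendsto 0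
      simpa using this.mono_left nhdsWithin_le_nhds
    have := hratio.add hpoly
    rw [add_zero] at this
    refine this.congr' ?_
    filter_upwards [self_mem_nhdsWithin] with t ht
    have ht' : t ≠ 0 := ne_of_gt (Set.mem_Ioi.mp ht)
    field_simp
    ring
  have := h0.add (tendsto_const_nhds : Tendsto (fun _ : ℝ => τ₁) (𝓝[>] (0:ℝ)) (𝓝 τ₁))
  rw [zero_add] at this
  refine this.congr' ?_
  filter_upwards [self_mem_nhdsWithin] with t ht
  have ht' : t ≠ 0 := ne_of_gt (Set.mem_Ioi.mp ht)
  field_simp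
  ring

lemma mul_self_tendsto (u : ℝ) (hu : 0 < u) :
    Tendsto (fun h : ℝ => h * u) (𝓝[>] (0:ℝ)) (𝓝[>] (0:ℝ)) := by
  apply tendsto_nhdsWithin_of_tendsto_nhds_of_eventually_within
  · have := (continuous_mul_right u).tendsto (0:ℝ)
    simpa using this.mono_left nhdsWithin_le_nhds
  · filter_upwards [self_mem_nhdsWithin] with h hh
    exact mul_pos (Set.mem_Ioi.mp hh) hu

/-- Mean relative error of the gradient constraint estimator in the continuous
(non-differentiable) case: the relative bias
`(I_F(h) − F(B₂^{1/2} h)) / F(B₂^{1/2} h)` converges, as `h → 0⁺`, to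
`(B₁ − B₂^{1/2}) / B₂^{1/2}`. -/
theorem stmt_10 (d : ℕ) (hd : 1 ≤ d) (R : ℝ) (hR : 0 < R)
    (K : ℝ → ℝ) (hKmeas : Measurable K) (hKnonneg : ∀ s, 0 ≤ K s)
    (hKbdd : ∃ M, ∀ s, K s ≤ M)
    (hKsupp : ∀ s, R < s → K s = 0)
    (mK : ℕ → ℝ) (hmK : ∀ j, mK j = ∫ s in (0:ℝ)..R, s ^ (j - 1) * K s)
    (hmKd : 0 < mK d)
    (B : ℕ → ℝ) (hB : ∀ p, B p = mK (d + p) / mK d)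
    (F : ℝ → ℝ) (hFcont : ContinuousOn F (Set.Ici 0))
    (hF0 : F 0 = 0)
    (hFpos : ∃ ε > 0, ∀ t : ℝ, 0 < t → t < ε → 0 < F t)
    (τ₁ τ₂ τ₃ : ℝ) (hτ₁ : 0 < τ₁)
    (hF : (fun t => F t - (τ₁ * t + τ₂ * t ^ 2 + τ₃ * t ^ 3))
      =o[𝓝[>] (0:ℝ)] fun t => t ^ 3)
    (IF : ℝ → ℝ)
    (hIF : ∀ h, IF h = (∫ u in (0:ℝ)..R, u ^ (d - 1) * K u * F (h * u)) / mK d) :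
    Tendsto
      (fun h => (IF h - F (Real.sqrt (B 2) * h)) / F (Real.sqrt (B 2) * h))
      (𝓝[>] (0:ℝ)) (𝓝 ((B 1 - Real.sqrt (B 2)) / Real.sqrt (B 2))) := by
  obtain ⟨M, hM⟩ := hKbdd
  set μ := volume.restrict (Set.Ioc (0:ℝ) R) with hμ
  -- integrability of moments
  have hint : ∀ n : ℕ, Integrable (fun s => s ^ n * K s) μ := by
    intro n
    have hmeas : AEStronglyMeasurable (fun s : ℝ => s ^ n * K s) μ :=
      ((measurable_id.pow_const n).mul hKmeas).aestronglyMeasurable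
    refine ⟨hmeas, ?_⟩
    have hb : ∀ᵐ s ∂μ, ‖s ^ n * K s‖ ≤ (max R 1) ^ n * M := by
      rw [hμ]
      filter_upwards [ae_restrict_mem measurableSet_Ioc] with s hs
      have h0 : 0 ≤ s := le_of_lt hs.1
      have hsR : s ≤ max R 1 := le_trans hs.2 (le_max_left _ _)
      rw [Real.norm_eq_abs, abs_of_nonneg (mul_nonneg (pow_nonneg h0 n) (hKnonneg s))]
      exact mul_le_mul (pow_le_pow_left₀ h0 hsR n) (hM s) (hKnonneg s)
        (pow_nonneg (le_trans hR.le (le_max_left _ _)) n)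
    exact (hasFiniteIntegral_const ((max R 1) ^ n * M)).mono' hb
  -- moments as set integrals
  have hmK' : ∀ j, mK j = ∫ s, s ^ (j - 1) * K s ∂μ := by
    intro j
    rw [hmK j, intervalIntegral.integral_of_le hR.le]
  -- positivity of mK (d+2)
  have hd2pos : 0 < mK (d + 2) := by
    have heq : mK (d + 2) = ∫ s, s ^ (d + 1) * K s ∂μ := by
      have := hmK' (d + 2)
      simpa using this
    have hnn : 0 ≤ᵐ[μ] fun s => s ^ (d + 1) * K s := by
      rw [hμ]
      filter_upwards [ae_restrict_mem measurableSet_Ioc] with s hs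
      exact mul_nonneg (pow_nonneg hs.1.le _) (hKnonneg s)
    rcases lt_or_eq_of_le (integral_nonneg_of_ae hnn) with hpos | hzero
    · rw [heq]; exact hpos
    · exfalso
      have hae : (fun s => s ^ (d + 1) * K s) =ᵐ[μ] 0 := by
        have := (integral_eq_zero_iff_of_nonneg_ae hnn (hint (d + 1))).mp hzero.symm
        exact this
      have hae2 : (fun s => s ^ (d - 1) * K s) =ᵐ[μ] 0 := by
        rw [hμ] at hae ⊢
        filter_upwards [hae, ae_restrict_mem measurableSet_Ioc] with s hs hmem
        have hs0 : s ≠ 0 := ne_of_gt hmem.1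
        have : K s = 0 := by
          by_contra hK
          exact hK (by
            have := hs
            simp only [Pi.zero_apply] at this
            have hp : s ^ (d + 1) ≠ 0 := pow_ne_zero _ hs0
            exact (mul_eq_zero.mp this).resolve_left hp)
        simp [this]
      have : mK d = 0 := by
        rw [hmK' d, integral_congr_ae hae2]
        simp
      linarith
  have hB2pos : 0 < B 2 := by
    rw [hB 2]
    exact div_pos hd2pos hmKd
  set c := Real.sqrt (B 2) with hc
  have hcpos : 0 < c := Real.sqrt_pos.mpr hB2pos
  -- the key limit of F t / t
  have phi := phi_lim F τ₁ τ₂ τ₃ hF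
  -- linear bound on F near 0
  have hbound : ∃ δ > 0, ∀ t : ℝ, 0 < t → t < δ → |F t| ≤ (τ₁ + 1) * t := by
    have hev : ∀ᶠ t in 𝓝[>] (0:ℝ), |F t / t - τ₁| < 1 :=
      Metric.tendsto_nhds.mp phi 1 one_pos
    rw [eventually_nhdsWithin_iff, Metric.eventually_nhds_iff] at hev
    obtain ⟨δ, hδ, hδ'⟩ := hev
    refine ⟨δ, hδ, fun t ht htδ => ?_⟩
    have hdist : dist t (0:ℝ) < δ := by
      rw [Real.dist_eq, sub_zero, abs_of_pos ht]; exact htδ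
    have := hδ' hdist (Set.mem_Ioi.mpr ht)
    have h1 : |F t / t| ≤ τ₁ + 1 := by
      calc |F t / t| ≤ |F t / t - τ₁| + |τ₁| := by
            have := abs_sub_abs_le_abs_sub (F t / t) τ₁
            linarith [abs_sub_abs_le_abs_sub (F t / t) τ₁]
        _ ≤ 1 + τ₁ := by
            rw [abs_of_pos hτ₁]; linarith
        _ = τ₁ + 1 := by ring
    calc |F t| = |F t / t| * t := by
          rw [abs_div, abs_of_pos ht, div_mul_cancel₀ _ (ne_of_gt ht)]
      _ ≤ (τ₁ + 1) * t := mul_le_mul_of_nonneg_right h1 ht.le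
  obtain ⟨δ, hδpos, hδ⟩ := hbound
  -- main convergence of the numerator integral divided by h
  have hnum : Tendsto (fun h => (∫ u, u ^ (d - 1) * K u * F (h * u) ∂μ) / h)
      (𝓝[>] (0:ℝ)) (𝓝 (τ₁ * mK (d + 1))) := by
    have hkey : Tendsto (fun h => ∫ u, u ^ (d - 1) * K u * (F (h * u) / h) ∂μ)
        (𝓝[>] (0:ℝ)) (𝓝 (∫ u, τ₁ * (u ^ d * K u) ∂μ)) := by
      apply tendsto_integral_filter_of_dominated_convergence
        (fun u => (τ₁ + 1) * (u ^ d * K u))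
      · -- measurability
        filter_upwards [self_mem_nhdsWithin] with h hh
        have hh' : 0 < h := Set.mem_Ioi.mp hh
        have hcont : ContinuousOn (fun u : ℝ => F (h * u)) (Set.Ioc 0 R) := by
          apply hFcont.comp (Continuous.continuousOn (by continuity))
          intro u hu
          exact mul_nonneg hh'.le hu.1.le
        have hFm : AEMeasurable (fun u : ℝ => F (h * u)) μ :=
          hcont.aemeasurable measurableSet_Ioc
        exact ((((measurable_id.pow_const (d-1)).aemeasurable.mul
          hKmeas.aemeasurable).mul (hFm.div_const h))).aestronglyMeasurable
      · -- bound
        have hmem : Set.Ioo (0:ℝ) (δ / R) ∈ 𝓝[>] (0:ℝ) :=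
          Ioo_mem_nhdsGT_of_mem ⟨le_refl _, div_pos hδpos hR⟩
        filter_upwards [hmem] with h hh
        rw [hμ]
        filter_upwards [ae_restrict_mem measurableSet_Ioc] with u hu
        have hh0 : 0 < h := hh.1
        have hu0 : 0 < u := hu.1
        have hhu : h * u < δ := by
          calc h * u ≤ h * R := mul_le_mul_of_nonneg_left hu.2 hh0.le
            _ < (δ / R) * R := by exact mul_lt_mul_of_pos_right hh.2 hR
            _ = δ := div_mul_cancel₀ _ (ne_of_gt hR)
        have hFb := hδ (h * u) (mul_pos hh0 hu0) hhu
        rw [Real.norm_eq_abs, abs_mul, abs_mul, abs_div,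
          abs_of_pos hh0, abs_of_nonneg (pow_nonneg hu0.le _),
          abs_of_nonneg (hKnonneg u)]
        calc u ^ (d-1) * K u * (|F (h * u)| / h)
            ≤ u ^ (d-1) * K u * (((τ₁ + 1) * (h * u)) / h) := by
              apply mul_le_mul_of_nonneg_left _ (mul_nonneg (pow_nonneg hu0.le _) (hKnonneg u))
              gcongr
          _ = (τ₁ + 1) * (u ^ d * K u) := by
              have hdd : d - 1 + 1 = d := Nat.succ_pred_eq_of_pos hd
              have h1 : (τ₁ + 1) * (h * u) / h = (τ₁ + 1) * u := by
                field_simp [hh0.ne']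
              have hp : u ^ d = u ^ (d-1) * u := by rw [← pow_succ, hdd]
              rw [h1, hp]
              ring
      · -- integrability of bound
        exact (hint d).const_mul (τ₁ + 1)
      · -- pointwise limit
        rw [hμ]
        filter_upwards [ae_restrict_mem measurableSet_Ioc] with u hu
        have hu0 : 0 < u := hu.1
        have h1 : Tendsto (fun h : ℝ => F (h * u) / h) (𝓝[>] (0:ℝ)) (𝓝 (τ₁ * u)) := by
          have h2 : Tendsto (fun h : ℝ => (F (h * u) / (h * u)) * u)
              (𝓝[>] (0:ℝ)) (𝓝 (τ₁ * u)) :=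
            (phi.comp (mul_self_tendsto u hu0)).mul_const u
          refine h2.congr' ?_
          filter_upwards [self_mem_nhdsWithin] with h hh
          have hh0 : h ≠ 0 := ne_of_gt (Set.mem_Ioi.mp hh)
          field_simp
        have hdd : d - 1 + 1 = d := Nat.succ_pred_eq_of_pos hd
        have hval2 : u ^ (d - 1) * K u * (τ₁ * u) = τ₁ * (u ^ d * K u) := by
          have hp : u ^ d = u ^ (d-1) * u := by rw [← pow_succ, hdd]
          rw [hp]; ring
        rw [← hval2]
        exact h1.const_mul _
    have heq : (∫ u, τ₁ * (u ^ d * K u) ∂μ) = τ₁ * mK (d + 1) := by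
      rw [integral_const_mul, hmK' (d + 1)]
      simp
    rw [← heq]
    refine hkey.congr' ?_
    filter_upwards [self_mem_nhdsWithin] with h hh
    have hh0 : h ≠ 0 := ne_of_gt (Set.mem_Ioi.mp hh)
    rw [← integral_div]
    congr 1
    ext u
    ring
  -- convergence of IF h / h
  have hIFlim : Tendsto (fun h => IF h / h) (𝓝[>] (0:ℝ)) (𝓝 (τ₁ * B 1)) := by
    have := hnum.div_const (mK d)
    have heq2 : τ₁ * mK (d + 1) / mK d = τ₁ * B 1 := by
      rw [hB 1]; field_simp
    rw [heq2] at this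
    refine this.congr' ?_
    filter_upwards with h
    rw [hIF h, intervalIntegral.integral_of_le hR.le]
    rw [div_div, div_div, mul_comm h (mK d)]
  -- convergence of F (c h) / h
  have hden : Tendsto (fun h => F (c * h) / h) (𝓝[>] (0:ℝ)) (𝓝 (τ₁ * c)) := by
    have hmap : Tendsto (fun h : ℝ => c * h) (𝓝[>] (0:ℝ)) (𝓝[>] (0:ℝ)) := by
      apply tendsto_nhdsWithin_of_tendsto_nhds_of_eventually_within
      · have := (continuous_mul_left c).tendsto (0:ℝ)
        simpa using this.mono_left nhdsWithin_le_nhds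
      · filter_upwards [self_mem_nhdsWithin] with h hh
        exact mul_pos hcpos (Set.mem_Ioi.mp hh)
    have h2 : Tendsto (fun h : ℝ => (F (c * h) / (c * h)) * c)
        (𝓝[>] (0:ℝ)) (𝓝 (τ₁ * c)) := (phi.comp hmap).mul_const c
    refine h2.congr' ?_
    filter_upwards [self_mem_nhdsWithin] with h hh
    have hh0 : h ≠ 0 := ne_of_gt (Set.mem_Ioi.mp hh)
    field_simp
  -- final combination
  have hfinal : Tendsto (fun h => (IF h / h - F (c * h) / h) / (F (c * h) / h))
      (𝓝[>] (0:ℝ)) (𝓝 ((τ₁ * B 1 - τ₁ * c) / (τ₁ * c))) :=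
    (hIFlim.sub hden).div hden (by positivity)
  have hval : (τ₁ * B 1 - τ₁ * c) / (τ₁ * c) = (B 1 - c) / c := by
    rw [← mul_sub]
    rw [mul_div_mul_left _ _ (ne_of_gt hτ₁)]
  rw [hval] at hfinal
  refine hfinal.congr' ?_
  filter_upwards [self_mem_nhdsWithin] with h hh
  have hh0 : h ≠ 0 := ne_of_gt (Set.mem_Ioi.mp hh)
  rw [div_sub_div_same]
  by_cases hy : F (c * h) = 0
  · simp [hy]
  · field_simp
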